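/- Let R = ℤ[w,z]/(w² - 2w, wz - 2w) and for an ideal I of R containing some power of w and some power of z, define k(I) = min{k ≥ 0 : ∃x ∈ I, wx = 2^k·w}. Then k(z·I) = k(I) + 1. -/

import Mathlib

open MvPolynomial

noncomputable def SWFIdeal : Ideal (MvPolynomial (Fin 2) ℤ) :=
  Ideal.span {(X 0 : MvPolynomial (Fin 2) ℤ) ^ 2 - 2 * X 0,
    (X 0 : MvPolynomial (Fin 2) ℤ) * X 1 - 2 * X 0}

abbrev SWFRing : Type := MvPolynomial (Fin 2) ℤ ⧸ SWFIdeal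

noncomputable def w : SWFRing := Ideal.Quotient.mk SWFIdeal (X 0)
noncomputable def z : SWFRing := Ideal.Quotient.mk SWFIdeal (X 1)

/-- `k(I) = min {k ≥ 0 : ∃ x ∈ I, wx = 2^k·w}`. -/
noncomputable def kIdeal (I : Ideal SWFRing) : ℕ :=
  sInf {k : ℕ | ∃ x ∈ I, w * x = 2 ^ k * w}

lemma ww : w * w = 2 * w := by
  have h : (Ideal.Quotient.mk SWFIdeal) ((X 0 : MvPolynomial (Fin 2) ℤ) ^ 2 - 2 * X 0) = 0 := by
    rw [Ideal.Quotient.eq_zero_iff_mem]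
    exact Ideal.subset_span (Set.mem_insert _ _)
  have := sub_eq_zero.mp (by simpa using h)
  simpa [w, pow_two, map_ofNat] using this

lemma wz : w * z = 2 * w := by
  have h : (Ideal.Quotient.mk SWFIdeal) ((X 0 : MvPolynomial (Fin 2) ℤ) * X 1 - 2 * X 0) = 0 := by
    rw [Ideal.Quotient.eq_zero_iff_mem]
    exact Ideal.subset_span (Set.mem_insert_of_mem _ rfl)
  have := sub_eq_zero.mp (by simpa using h)
  simpa [w, z, map_ofNat] using this

noncomputable def φ : SWFRing →+* ℤ :=
  Ideal.Quotient.lift SWFIdeal (eval (fun _ => (2:ℤ))) (by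
    intro a ha
    refine Submodule.span_induction ?_ ?_ ?_ ?_ ha
    · rintro p (rfl | rfl) <;> simp
    · simp
    · intro x y _ _ hx hy; simp [hx, hy]
    · intro r x _ hx; simp [hx])

lemma φw : φ w = 2 := by simp [φ, w]

lemma torsion_free (n : ℤ) (h : (n : SWFRing) * w = 0) : n = 0 := by
  have := congrArg φ h
  simp [φw] at this
  omega

lemma mulw (x : SWFRing) : ∃ n : ℤ, w * x = (n : SWFRing) * w := by
  obtain ⟨p, rfl⟩ := Ideal.Quotient.mk_surjective x
  induction p using MvPolynomial.induction_on with
  | C a => exact ⟨a, by simp [mul_comm]⟩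
  | add p q hp hq =>
      obtain ⟨n, hn⟩ := hp; obtain ⟨m, hm⟩ := hq
      exact ⟨n + m, by push_cast; rw [map_add, mul_add, hn, hm]; ring⟩
  | mul_X p i hp =>
      obtain ⟨n, hn⟩ := hp
      refine ⟨2 * n, ?_⟩
      have key : w * (Ideal.Quotient.mk SWFIdeal) (X i) = 2 * w := by
        fin_cases i
        exacts [ww, wz]
      rw [map_mul, ← mul_assoc, hn, mul_assoc, key]
      push_cast; ring

lemma wpow (a : ℕ) : w * w ^ a = 2 ^ a * w := by
  induction a with
  | zero => simp
  | succ n ih => rw [pow_succ, ← mul_assoc, ih, mul_assoc, ww, ← mul_assoc, ← pow_succ]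

lemma down {I : Ideal SWFRing} {k : ℕ}
    (h : ∃ x ∈ Ideal.span {z} * I, w * x = 2 ^ k * w) :
    1 ≤ k ∧ ∃ x ∈ I, w * x = 2 ^ (k - 1) * w := by
  obtain ⟨x, hx, hwx⟩ := h
  obtain ⟨y, hy, rfl⟩ := Ideal.mem_span_singleton_mul.mp hx
  obtain ⟨n, hn⟩ := mulw y
  have hw2 : (2 : SWFRing) * (w * y) = 2 ^ k * w := by
    rw [← mul_assoc, ← wz, mul_assoc, hwx]
  have h2 : ((2 * n - 2 ^ k : ℤ) : SWFRing) * w = 0 := by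
    push_cast
    rw [sub_mul, mul_assoc, ← hn, hw2, sub_self]
  have h3 : 2 * n - 2 ^ k = 0 := torsion_free _ h2
  have hk : 1 ≤ k := by
    rcases Nat.eq_zero_or_pos k with rfl | h
    · omega
    · exact h
  have hn2 : n = 2 ^ (k - 1) := by
    have : (2:ℤ) ^ k = 2 * 2 ^ (k - 1) := by
      rw [← pow_succ']
      congr 1
      omega
    omega
  refine ⟨hk, y, hy, ?_⟩
  rw [hn, hn2]
  push_cast
  ring

lemma up {I : Ideal SWFRing} {k : ℕ} (h : ∃ x ∈ I, w * x = 2 ^ k * w) :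
    ∃ x ∈ Ideal.span {z} * I, w * x = 2 ^ (k + 1) * w := by
  obtain ⟨x, hx, hwx⟩ := h
  refine ⟨z * x, Ideal.mem_span_singleton_mul.mpr ⟨x, hx, rfl⟩, ?_⟩
  rw [← mul_assoc, wz, mul_assoc, hwx, ← mul_assoc, ← pow_succ']

/-- If `I` contains some power of `w` and some power of `z`, then `k(z·I) = k(I) + 1`. -/
theorem stmt_8 (I : Ideal SWFRing) (hw : ∃ a : ℕ, w ^ a ∈ I) (hz : ∃ b : ℕ, z ^ b ∈ I) :
    kIdeal (Ideal.span {z} * I) = kIdeal I + 1 := by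
  obtain ⟨a, ha⟩ := hw
  have hne : {k : ℕ | ∃ x ∈ I, w * x = 2 ^ k * w}.Nonempty := ⟨a, w ^ a, ha, wpow a⟩
  have hm : kIdeal I ∈ {k : ℕ | ∃ x ∈ I, w * x = 2 ^ k * w} := Nat.sInf_mem hne
  have hup := up hm
  have hne' : {k : ℕ | ∃ x ∈ Ideal.span {z} * I, w * x = 2 ^ k * w}.Nonempty :=
    ⟨kIdeal I + 1, hup⟩
  have hle : kIdeal (Ideal.span {z} * I) ≤ kIdeal I + 1 := Nat.sInf_le hup
  have hm' := Nat.sInf_mem hne'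
  obtain ⟨h1, hdown⟩ := down hm'
  have h4 : kIdeal I ≤ kIdeal (Ideal.span {z} * I) - 1 := Nat.sInf_le hdown
  unfold kIdeal at hle h4 ⊢
  omega
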